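/- In the WMM I²E abstract machine, the IRIW outcome is reachable without Commit fences but unreachable with them: for the program P1: St a 1; P2: r1 = Ld a; Reconcile; r2 = Ld b; P3: St b 1; P4: r3 = Ld b; Reconcile; r4 = Ld a (a ≠ b, initialized to 0), the outcome r1 = 1, r2 = 0, r3 = 1, r4 = 0 is unreachable in WMM. -/

import Mathlib

/-- Instruction operations of the WMM axiomatic model. -/
inductive IOp
  | ld (a : ℕ)
  | st (a : ℕ) (v : ℕ)
  | commit
  | reconcile
  | nm
  deriving DecidableEq

/-- An instruction: processor id, position in program order, operation. -/
structure Instr where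
  proc : ℕ
  idx : ℕ
  op : IOp
  deriving DecidableEq

/-- Per-processor program order. -/
def po (x y : Instr) : Prop := x.proc = y.proc ∧ x.idx < y.idx

/-- The WMM order-preserving table `order(X, Y)`. -/
def ordTable : IOp → IOp → Prop
  | .ld a, .ld b => a = b
  | .ld _, .st _ _ => True
  | .ld _, .reconcile => True
  | .ld _, .commit => True
  | .st a _, .st b _ => a = b
  | .st _ _, .commit => True
  | .st _ _, .ld _ => False
  | .st _ _, .reconcile => False
  | .reconcile, .ld _ => True
  | .reconcile, .st _ _ => True
  | .reconcile, .reconcile => True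
  | .reconcile, .commit => True
  | .commit, .ld _ => False
  | .commit, .st _ _ => True
  | .commit, .reconcile => True
  | .commit, .commit => True
  | _, _ => False

def isStoreTo (a : ℕ) (x : Instr) : Prop := ∃ v, x.op = IOp.st a v
def isLoadOf (a : ℕ) (x : Instr) : Prop := x.op = IOp.ld a

/-- A WMM axiomatic execution: a set of instructions `I`, a global memory
order `mo` (strict total on `I`), a reads-from relation `rf`, satisfying the
Inst-Order and Ld-Val axioms of WMM. -/
abbrev Buf := List (ℕ × ℕ)

def hasAddr (l : Buf) (a : ℕ) : Prop := a ∈ l.map Prod.fst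

instance (l : Buf) (a : ℕ) : Decidable (hasAddr l a) :=
  inferInstanceAs (Decidable (a ∈ l.map Prod.fst))

def remAddr (l : Buf) (a : ℕ) : Buf := l.filter (fun e => e.1 ≠ a)

/-- State of the WMM I²E machine running a program `prog` (processor × index →
operation): atomic memory, store buffers and invalidation buffers (head =
newest), per-processor count of executed instructions, and recorded load
results. -/
structure PSt where
  mem : ℕ → ℕ
  sb : ℕ → Buf
  ib : ℕ → Buf
  cnt : ℕ → ℕ
  res : ℕ → ℕ → ℕ

def setRes (res : ℕ → ℕ → ℕ) (i k v : ℕ) : ℕ → ℕ → ℕ :=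
  fun j l => if j = i ∧ l = k then v else res j l

/-- Operations of the WMM I²E abstract machine executing `prog`. -/
inductive PStep (prog : ℕ → ℕ → IOp) : PSt → PSt → Prop
  | nm (s : PSt) (i : ℕ) (h : prog i (s.cnt i) = IOp.nm) :
      PStep prog s { s with cnt := Function.update s.cnt i (s.cnt i + 1) }
  | store (s : PSt) (i a v : ℕ) (h : prog i (s.cnt i) = IOp.st a v) :
      PStep prog s
        { s with sb := Function.update s.sb i ((a, v) :: s.sb i),
                 ib := Function.update s.ib i (remAddr (s.ib i) a),
                 cnt := Function.update s.cnt i (s.cnt i + 1) }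
  | commit (s : PSt) (i : ℕ) (h : prog i (s.cnt i) = IOp.commit)
      (he : s.sb i = []) :
      PStep prog s { s with cnt := Function.update s.cnt i (s.cnt i + 1) }
  | reconcile (s : PSt) (i : ℕ) (h : prog i (s.cnt i) = IOp.reconcile) :
      PStep prog s
        { s with ib := Function.update s.ib i [],
                 cnt := Function.update s.cnt i (s.cnt i + 1) }
  | ldSb (s : PSt) (i a v : ℕ) (l1 l2 : Buf) (h : prog i (s.cnt i) = IOp.ld a)
      (hsb : s.sb i = l1 ++ (a, v) :: l2) (hy : ¬ hasAddr l1 a) :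
      PStep prog s
        { s with res := setRes s.res i (s.cnt i) v,
                 cnt := Function.update s.cnt i (s.cnt i + 1) }
  | ldMem (s : PSt) (i a : ℕ) (h : prog i (s.cnt i) = IOp.ld a)
      (hn : ¬ hasAddr (s.sb i) a) :
      PStep prog s
        { s with res := setRes s.res i (s.cnt i) (s.mem a),
                 ib := Function.update s.ib i (remAddr (s.ib i) a),
                 cnt := Function.update s.cnt i (s.cnt i + 1) }
  | ldIb (s : PSt) (i a v : ℕ) (l1 l2 : Buf) (h : prog i (s.cnt i) = IOp.ld a)
      (hn : ¬ hasAddr (s.sb i) a) (hib : s.ib i = l1 ++ (a, v) :: l2) :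
      PStep prog s
        { s with res := setRes s.res i (s.cnt i) v,
                 ib := Function.update s.ib i (l1 ++ (a, v) :: remAddr l2 a),
                 cnt := Function.update s.cnt i (s.cnt i + 1) }
  | deqSb (s : PSt) (i a v : ℕ) (l1 l2 : Buf)
      (hsb : s.sb i = l1 ++ (a, v) :: l2) (hold : ¬ hasAddr l2 a) :
      PStep prog s
        { s with mem := Function.update s.mem a v,
                 sb := Function.update s.sb i (l1 ++ l2),
                 ib := fun j => if j = i ∨ hasAddr (s.sb j) a then s.ib j
                                else (a, s.mem a) :: s.ib j }

def PInit (m0 : ℕ → ℕ) : PSt :=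
  { mem := m0, sb := fun _ => [], ib := fun _ => [],
    cnt := fun _ => 0, res := fun _ _ => 0 }

/-- The IRIW program with Reconcile fences: P0: St a 1; P1: Ld a; Reconcile;
Ld b; P2: St b 1; P3: Ld b; Reconcile; Ld a. -/
def iriwProg (a b : ℕ) : ℕ → ℕ → IOp := fun i k =>
  match i, k with
  | 0, 0 => IOp.st a 1
  | 1, 0 => IOp.ld a
  | 1, 1 => IOp.reconcile
  | 1, 2 => IOp.ld b
  | 2, 0 => IOp.st b 1
  | 3, 0 => IOp.ld b
  | 3, 1 => IOp.reconcile
  | 3, 2 => IOp.ld a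
  | _, _ => IOp.nm

section IRIWaux

variable (a b : ℕ)

lemma iriw_st {i k x v : ℕ} (h : iriwProg a b i k = IOp.st x v) :
    (i = 0 ∧ k = 0 ∧ x = a ∧ v = 1) ∨ (i = 2 ∧ k = 0 ∧ x = b ∧ v = 1) := by
  rcases i with _|_|_|_|i <;> rcases k with _|_|_|k <;> simp_all [iriwProg] <;> omega

lemma iriw_ld {i k x : ℕ} (h : iriwProg a b i k = IOp.ld x) :
    (i = 1 ∧ k = 0 ∧ x = a) ∨ (i = 1 ∧ k = 2 ∧ x = b) ∨
    (i = 3 ∧ k = 0 ∧ x = b) ∨ (i = 3 ∧ k = 2 ∧ x = a) := by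
  rcases i with _|_|_|_|i <;> rcases k with _|_|_|k <;> simp_all [iriwProg] <;> omega

lemma iriw_rec {i k : ℕ} (h : iriwProg a b i k = IOp.reconcile) :
    (i = 1 ∧ k = 1) ∨ (i = 3 ∧ k = 1) := by
  rcases i with _|_|_|_|i <;> rcases k with _|_|_|k <;> simp_all [iriwProg] <;> omega

lemma iriw_com {i k : ℕ} (h : iriwProg a b i k = IOp.commit) : False := by
  rcases i with _|_|_|_|i <;> rcases k with _|_|_|k <;> simp_all [iriwProg] <;> omega

lemma iriw_nm {i k : ℕ} (h : iriwProg a b i k = IOp.nm) :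
    (i = 0 → 1 ≤ k) ∧ (i = 1 → 3 ≤ k) ∧ (i = 2 → 1 ≤ k) ∧ (i = 3 → 3 ≤ k) := by
  rcases i with _|_|_|_|i <;> rcases k with _|_|_|k <;> simp_all [iriwProg] <;> omega

end IRIWaux

section IRIWinv

def IL1 (b : ℕ) (s : PSt) : Prop :=
  s.res 1 0 = 1 ∧ ((3 ≤ s.cnt 1 ∧ s.res 1 2 = 0) ∨
    (s.cnt 1 = 2 ∧ (s.mem b = 0 ∨ hasAddr (s.ib 1) b)))

def IL3 (a : ℕ) (s : PSt) : Prop :=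
  s.res 3 0 = 1 ∧ ((3 ≤ s.cnt 3 ∧ s.res 3 2 = 0) ∨
    (s.cnt 3 = 2 ∧ (s.mem a = 0 ∨ hasAddr (s.ib 3) a)))

def WInv (a b : ℕ) (s : PSt) : Prop :=
  (∀ j, j ≠ 0 → j ≠ 2 → s.sb j = []) ∧
  ((s.cnt 0 = 0 ∧ s.sb 0 = [] ∧ s.mem a = 0) ∨
   (1 ≤ s.cnt 0 ∧ s.sb 0 = [(a,1)] ∧ s.mem a = 0) ∨
   (1 ≤ s.cnt 0 ∧ s.sb 0 = [] ∧ s.mem a = 1)) ∧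
  ((s.cnt 2 = 0 ∧ s.sb 2 = [] ∧ s.mem b = 0) ∨
   (1 ≤ s.cnt 2 ∧ s.sb 2 = [(b,1)] ∧ s.mem b = 0) ∨
   (1 ≤ s.cnt 2 ∧ s.sb 2 = [] ∧ s.mem b = 1)) ∧
  (∀ j p, p ∈ s.ib j → p = (a,0) ∨ p = (b,0)) ∧
  (1 ≤ s.cnt 1 → s.res 1 0 = 1 → s.mem a = 1) ∧
  (1 ≤ s.cnt 3 → s.res 3 0 = 1 → s.mem b = 1) ∧
  ¬(IL1 b s ∧ IL3 a s)

lemma inv_init (a b : ℕ) : WInv a b (PInit fun _ => 0) := by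
  simp [WInv, PInit, IL1, IL3, hasAddr]

lemma single_split {p q : ℕ × ℕ} {l1 l2 : Buf} (h : [q] = l1 ++ p :: l2) :
    l1 = [] ∧ p = q ∧ l2 = [] := by
  cases l1 <;> simp_all

lemma mem_remAddr {p : ℕ × ℕ} {l : Buf} {c : ℕ} (h : p ∈ remAddr l c) : p ∈ l :=
  List.mem_of_mem_filter h

lemma hasAddr_cons {p : ℕ × ℕ} {l : Buf} {c : ℕ} :
    hasAddr (p :: l) c ↔ p.1 = c ∨ hasAddr l c := by
  simp [hasAddr, eq_comm]

end IRIWinv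

lemma hasAddr_nil (c : ℕ) : hasAddr [] c ↔ False := by simp [hasAddr]

lemma mem_of_mem_mid {p q : ℕ × ℕ} {l1 l2 l : Buf} {c : ℕ}
    (hl : l = l1 ++ q :: l2) (hp : p ∈ l1 ++ q :: remAddr l2 c) : p ∈ l := by
  subst hl
  rcases List.mem_append.1 hp with h | h
  · exact List.mem_append.2 (Or.inl h)
  · rcases List.mem_cons.1 h with h | h
    · exact List.mem_append.2 (Or.inr (List.mem_cons.2 (Or.inl h)))
    · exact List.mem_append.2 (Or.inr (List.mem_cons.2 (Or.inr (mem_remAddr h))))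

lemma hasAddr_mid {q : ℕ × ℕ} {l1 l2 l : Buf} (hl : l = l1 ++ q :: l2) :
    hasAddr l q.1 := by
  subst hl
  simp [hasAddr]

lemma inv_step {a b : ℕ} (hab : a ≠ b) {s t : PSt} (hI : WInv a b s)
    (hst : PStep (iriwProg a b) s t) : WInv a b t := by
  obtain ⟨hsb, hPA, hPB, hib, hA1, hB3, hM⟩ := hI
  cases hst with
  | nm i h =>
    obtain ⟨q0, q1, q2, q3⟩ := iriw_nm a b h
    unfold WInv
    dsimp only
    simp only [Function.update_apply]
    refine ⟨hsb, ?_, ?_, hib, ?_, ?_, ?_⟩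
    · by_cases hi : (0:ℕ) = i
      · subst hi
        have hq := q0 rfl
        rw [if_pos rfl]
        rcases hPA with ⟨c, h1, h2⟩ | ⟨c, h1, h2⟩ | ⟨c, h1, h2⟩
        · exact absurd c (by omega)
        · exact Or.inr (Or.inl ⟨by omega, h1, h2⟩)
        · exact Or.inr (Or.inr ⟨by omega, h1, h2⟩)
      · simpa [hi] using hPA
    · by_cases hi : (2:ℕ) = i
      · subst hi
        have hq := q2 rfl
        rw [if_pos rfl]
        rcases hPB with ⟨c, h1, h2⟩ | ⟨c, h1, h2⟩ | ⟨c, h1, h2⟩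
        · exact absurd c (by omega)
        · exact Or.inr (Or.inl ⟨by omega, h1, h2⟩)
        · exact Or.inr (Or.inr ⟨by omega, h1, h2⟩)
      · simpa [hi] using hPB
    · intro hc hr
      by_cases hi : (1:ℕ) = i
      · exact hA1 (by subst hi; have := q1 rfl; omega) hr
      · rw [if_neg hi] at hc; exact hA1 hc hr
    · intro hc hr
      by_cases hi : (3:ℕ) = i
      · exact hB3 (by subst hi; have := q3 rfl; omega) hr
      · rw [if_neg hi] at hc; exact hB3 hc hr
    · rintro ⟨h1, h3⟩
      simp only [IL1, IL3, Function.update_apply] at h1 h3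
      refine hM ⟨?_, ?_⟩
      · obtain ⟨hr, hbr⟩ := h1
        refine ⟨hr, ?_⟩
        by_cases hi : (1:ℕ) = i
        · subst hi
          have hq := q1 rfl
          rw [if_pos rfl] at hbr
          rcases hbr with ⟨hc, hr2⟩ | ⟨hc, _⟩
          · exact Or.inl ⟨by omega, hr2⟩
          · omega
        · rw [if_neg hi] at hbr; exact hbr
      · obtain ⟨hr, hbr⟩ := h3
        refine ⟨hr, ?_⟩
        by_cases hi : (3:ℕ) = i
        · subst hi
          have hq := q3 rfl
          rw [if_pos rfl] at hbr
          rcases hbr with ⟨hc, hr2⟩ | ⟨hc, _⟩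
          · exact Or.inl ⟨by omega, hr2⟩
          · omega
        · rw [if_neg hi] at hbr; exact hbr
  | store i x v h =>
    unfold WInv
    dsimp only
    rcases iriw_st a b h with ⟨hi, hk, hx, hv⟩ | ⟨hi, hk, hx, hv⟩ <;>
      subst hi <;> replace hx := hx.symm <;> subst hx <;> subst hv <;>
      simp (config := { decide := true }) only [Function.update_apply, if_true, if_false]
    · rcases hPA with ⟨c, h1, h2⟩ | ⟨c, h1, h2⟩ | ⟨c, h1, h2⟩
      · refine ⟨?_, Or.inr (Or.inl ⟨by omega, by rw [h1], h2⟩), hPB, ?_, hA1, hB3, ?_⟩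
        · intro j hj0 hj2
          rw [if_neg hj0]
          exact hsb j hj0 hj2
        · intro j p hp
          by_cases hj : j = 0
          · subst hj; rw [if_pos rfl] at hp; exact hib 0 p (mem_remAddr hp)
          · rw [if_neg hj] at hp; exact hib j p hp
        · rintro ⟨h1', h3'⟩
          simp (config := { decide := true }) only [IL1, IL3, Function.update_apply, if_true, if_false] at h1' h3'
          exact hM ⟨h1', h3'⟩
      · exact absurd c (by omega)
      · exact absurd c (by omega)
    · rcases hPB with ⟨c, h1, h2⟩ | ⟨c, h1, h2⟩ | ⟨c, h1, h2⟩
      · refine ⟨?_, hPA, Or.inr (Or.inl ⟨by omega, by rw [h1], h2⟩), ?_, hA1, hB3, ?_⟩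
        · intro j hj0 hj2
          rw [if_neg hj2]
          exact hsb j hj0 hj2
        · intro j p hp
          by_cases hj : j = 2
          · subst hj; rw [if_pos rfl] at hp; exact hib 2 p (mem_remAddr hp)
          · rw [if_neg hj] at hp; exact hib j p hp
        · rintro ⟨h1', h3'⟩
          simp (config := { decide := true }) only [IL1, IL3, Function.update_apply, if_true, if_false] at h1' h3'
          exact hM ⟨h1', h3'⟩
      · exact absurd c (by omega)
      · exact absurd c (by omega)
  | commit i h he => exact (iriw_com a b h).elim
  | reconcile i h =>
    unfold WInv
    dsimp only
    rcases iriw_rec a b h with ⟨hi, hk⟩ | ⟨hi, hk⟩ <;> subst hi <;>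
      simp (config := { decide := true }) only [Function.update_apply, if_true, if_false]
    · refine ⟨hsb, hPA, hPB, ?_, ?_, hB3, ?_⟩
      · intro j p hp
        by_cases hj : j = 1
        · subst hj; rw [if_pos rfl] at hp; simp at hp
        · rw [if_neg hj] at hp; exact hib j p hp
      · intro _ hr; exact hA1 (by omega) hr
      · rintro ⟨h1', h3'⟩
        simp (config := { decide := true }) only [IL1, IL3, hk, Function.update_apply,
          hasAddr_nil, if_true, if_false, false_and, and_false, false_or, or_false, true_and, and_true, true_or, or_true] at h1' h3'
        obtain ⟨hr1, hmb⟩ := h1'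
        have hc3 : 1 ≤ s.cnt 3 := by
          rcases h3'.2 with ⟨hc, _⟩ | ⟨hc, _⟩ <;> omega
        have := hB3 hc3 h3'.1
        omega
    · refine ⟨hsb, hPA, hPB, ?_, hA1, ?_, ?_⟩
      · intro j p hp
        by_cases hj : j = 3
        · subst hj; rw [if_pos rfl] at hp; simp at hp
        · rw [if_neg hj] at hp; exact hib j p hp
      · intro _ hr; exact hB3 (by omega) hr
      · rintro ⟨h1', h3'⟩
        simp (config := { decide := true }) only [IL1, IL3, hk, Function.update_apply,
          hasAddr_nil, if_true, if_false, false_and, and_false, false_or, or_false, true_and, and_true, true_or, or_true] at h1' h3'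
        obtain ⟨hr3, hma⟩ := h3'
        have hc1 : 1 ≤ s.cnt 1 := by
          rcases h1'.2 with ⟨hc, _⟩ | ⟨hc, _⟩ <;> omega
        have := hA1 hc1 h1'.1
        omega
  | ldSb i x v l1 l2 h hsb' hy =>
    have hi : i ≠ 0 ∧ i ≠ 2 := by
      rcases iriw_ld a b h with ⟨h1, _, _⟩ | ⟨h1, _, _⟩ | ⟨h1, _, _⟩ | ⟨h1, _, _⟩ <;>
        subst h1 <;> exact ⟨by decide, by decide⟩
    rw [hsb i hi.1 hi.2] at hsb'
    exact absurd hsb' (by cases l1 <;> simp)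
  | ldMem i x h hn =>
    unfold WInv
    dsimp only
    rcases iriw_ld a b h with ⟨hi, hk, hx⟩ | ⟨hi, hk, hx⟩ | ⟨hi, hk, hx⟩ | ⟨hi, hk, hx⟩ <;>
      subst hi <;> replace hx := hx.symm <;> subst hx <;>
      simp (config := { decide := true }) only [setRes, hk, Function.update_apply, if_true, if_false, false_and, and_false, false_or, or_false, true_and, and_true, true_or, or_true]
    · refine ⟨hsb, hPA, hPB, ?_, ?_, hB3, ?_⟩
      · intro j p hp
        by_cases hj : j = 1
        · subst hj; rw [if_pos rfl] at hp; exact hib 1 p (mem_remAddr hp)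
        · rw [if_neg hj] at hp; exact hib j p hp
      · intro _ hr; exact hr
      · rintro ⟨h1', h3'⟩
        simp (config := { decide := true }) only [IL1, IL3, setRes, hk, Function.update_apply,
          if_true, if_false, false_and, and_false, false_or, or_false, true_and, and_true, true_or, or_true] at h1' h3'
    · refine ⟨hsb, hPA, hPB, ?_, ?_, hB3, ?_⟩
      · intro j p hp
        by_cases hj : j = 1
        · subst hj; rw [if_pos rfl] at hp; exact hib 1 p (mem_remAddr hp)
        · rw [if_neg hj] at hp; exact hib j p hp
      · intro _ hr; exact hA1 (by omega) hr
      · rintro ⟨h1', h3'⟩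
        simp (config := { decide := true }) only [IL1, IL3, setRes, hk, Function.update_apply,
          if_true, if_false, false_and, and_false, false_or, or_false, true_and, and_true, true_or, or_true] at h1' h3'
        exact hM ⟨⟨h1'.1, Or.inr ⟨hk, Or.inl h1'.2⟩⟩, h3'⟩
    · refine ⟨hsb, hPA, hPB, ?_, hA1, ?_, ?_⟩
      · intro j p hp
        by_cases hj : j = 3
        · subst hj; rw [if_pos rfl] at hp; exact hib 3 p (mem_remAddr hp)
        · rw [if_neg hj] at hp; exact hib j p hp
      · intro _ hr; exact hr
      · rintro ⟨h1', h3'⟩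
        simp (config := { decide := true }) only [IL1, IL3, setRes, hk, Function.update_apply,
          if_true, if_false, false_and, and_false, false_or, or_false, true_and, and_true, true_or, or_true] at h1' h3'
    · refine ⟨hsb, hPA, hPB, ?_, hA1, ?_, ?_⟩
      · intro j p hp
        by_cases hj : j = 3
        · subst hj; rw [if_pos rfl] at hp; exact hib 3 p (mem_remAddr hp)
        · rw [if_neg hj] at hp; exact hib j p hp
      · intro _ hr; exact hB3 (by omega) hr
      · rintro ⟨h1', h3'⟩
        simp (config := { decide := true }) only [IL1, IL3, setRes, hk, Function.update_apply,
          if_true, if_false, false_and, and_false, false_or, or_false, true_and, and_true, true_or, or_true] at h1' h3'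
        exact hM ⟨h1', ⟨h3'.1, Or.inr ⟨hk, Or.inl h3'.2⟩⟩⟩
  | ldIb i x v l1 l2 h hn hib' =>
    have hmemv : (x, v) ∈ s.ib i := by
      rw [hib']; exact List.mem_append.2 (Or.inr List.mem_cons_self)
    unfold WInv
    dsimp only
    rcases iriw_ld a b h with ⟨hi, hk, hx⟩ | ⟨hi, hk, hx⟩ | ⟨hi, hk, hx⟩ | ⟨hi, hk, hx⟩ <;>
      subst hi <;> replace hx := hx.symm <;> subst hx
    all_goals
      have hv : v = 0 := by
        rcases hib _ _ hmemv with hh | hh <;> simp_all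
      subst hv
    all_goals simp (config := { decide := true }) only [setRes, hk, Function.update_apply, if_true, if_false, false_and, and_false, false_or, or_false, true_and, and_true, true_or, or_true]
    · refine ⟨hsb, hPA, hPB, ?_, ?_, hB3, ?_⟩
      · intro j p hp
        by_cases hj : j = 1
        · subst hj; rw [if_pos rfl] at hp; exact hib 1 p (mem_of_mem_mid hib' hp)
        · rw [if_neg hj] at hp; exact hib j p hp
      · intro _ hr; first | exact hr.elim | exact absurd hr (by omega)
      · rintro ⟨h1', h3'⟩
        simp (config := { decide := true }) only [IL1, IL3, setRes, hk, Function.update_apply,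
          if_true, if_false, false_and, and_false, false_or, or_false, true_and, and_true, true_or, or_true] at h1' h3'
    · refine ⟨hsb, hPA, hPB, ?_, ?_, hB3, ?_⟩
      · intro j p hp
        by_cases hj : j = 1
        · subst hj; rw [if_pos rfl] at hp; exact hib 1 p (mem_of_mem_mid hib' hp)
        · rw [if_neg hj] at hp; exact hib j p hp
      · intro _ hr; exact hA1 (by omega) hr
      · rintro ⟨h1', h3'⟩
        simp (config := { decide := true }) only [IL1, IL3, setRes, hk, Function.update_apply,
          if_true, if_false, false_and, and_false, false_or, or_false, true_and, and_true, true_or, or_true] at h1' h3'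
        exact hM ⟨⟨h1', Or.inr ⟨hk, Or.inr (hasAddr_mid hib')⟩⟩, h3'⟩
    · refine ⟨hsb, hPA, hPB, ?_, hA1, ?_, ?_⟩
      · intro j p hp
        by_cases hj : j = 3
        · subst hj; rw [if_pos rfl] at hp; exact hib 3 p (mem_of_mem_mid hib' hp)
        · rw [if_neg hj] at hp; exact hib j p hp
      · intro _ hr; first | exact hr.elim | exact absurd hr (by omega)
      · rintro ⟨h1', h3'⟩
        simp (config := { decide := true }) only [IL1, IL3, setRes, hk, Function.update_apply,
          if_true, if_false, false_and, and_false, false_or, or_false, true_and, and_true, true_or, or_true] at h1' h3'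
    · refine ⟨hsb, hPA, hPB, ?_, hA1, ?_, ?_⟩
      · intro j p hp
        by_cases hj : j = 3
        · subst hj; rw [if_pos rfl] at hp; exact hib 3 p (mem_of_mem_mid hib' hp)
        · rw [if_neg hj] at hp; exact hib j p hp
      · intro _ hr; exact hB3 (by omega) hr
      · rintro ⟨h1', h3'⟩
        simp (config := { decide := true }) only [IL1, IL3, setRes, hk, Function.update_apply,
          if_true, if_false, false_and, and_false, false_or, or_false, true_and, and_true, true_or, or_true] at h1' h3'
        exact hM ⟨h1', ⟨h3', Or.inr ⟨hk, Or.inr (hasAddr_mid hib')⟩⟩⟩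
  | deqSb i x v l1 l2 hsb' hold =>
    have hba : b ≠ a := Ne.symm hab
    by_cases hi0 : i = 0
    · subst hi0
      rcases hPA with ⟨c, h1, h2⟩ | ⟨c, h1, h2⟩ | ⟨c, h1, h2⟩
      · rw [h1] at hsb'; exact absurd hsb' (by cases l1 <;> simp)
      · rw [h1] at hsb'
        obtain ⟨hl1, hxv, hl2⟩ := single_split hsb'
        subst hl1; subst hl2
        simp only [Prod.mk.injEq] at hxv
        obtain ⟨hx1, hv1⟩ := hxv
        replace hx1 := hx1.symm
        subst hx1; subst hv1
        have hs1 : s.sb 1 = [] := hsb 1 (by decide) (by decide)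
        have hs3 : s.sb 3 = [] := hsb 3 (by decide) (by decide)
        unfold WInv
        dsimp only
        refine ⟨?_, ?_, ?_, ?_, ?_, ?_, ?_⟩
        · intro j hj0 hj2
          simp only [Function.update_apply]
          rw [if_neg hj0]
          exact hsb j hj0 hj2
        · exact Or.inr (Or.inr ⟨c, by simp, by simp⟩)
        · rcases hPB with ⟨c', e1', e2'⟩ | ⟨c', e1', e2'⟩ | ⟨c', e1', e2'⟩
          · exact Or.inl ⟨c', by simpa [Function.update_apply] using e1',
              by simpa [Function.update_apply, hba] using e2'⟩
          · exact Or.inr (Or.inl ⟨c', by simpa [Function.update_apply] using e1',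
              by simpa [Function.update_apply, hba] using e2'⟩)
          · exact Or.inr (Or.inr ⟨c', by simpa [Function.update_apply] using e1',
              by simpa [Function.update_apply, hba] using e2'⟩)
        · intro j p hp
          by_cases hc' : j = 0 ∨ hasAddr (s.sb j) a
          · rw [if_pos hc'] at hp; exact hib j p hp
          · rw [if_neg hc'] at hp
            rcases List.mem_cons.1 hp with hp | hp
            · left; rw [hp, h2]
            · exact hib j p hp
        · intro _ _; simp
        · intro hc' hr
          simpa [Function.update_apply, hba] using hB3 hc' hr
        · rintro ⟨h1', h3'⟩
          simp (config := { decide := true }) only [IL1, IL3, Function.update_apply,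
            eq_self_iff_true, hab, hba, hs1, hs3, hasAddr_nil, hasAddr_cons,
            if_true, if_false, false_and, and_false, false_or, or_false, true_and, and_true, true_or, or_true] at h1' h3'
          refine hM ⟨⟨h1'.1, ?_⟩, ⟨h3'.1, ?_⟩⟩
          · rcases h1'.2 with hbr | ⟨hc', hd⟩
            · exact Or.inl hbr
            · exact Or.inr ⟨hc', hd⟩
          · rcases h3'.2 with hbr | hc'
            · exact Or.inl hbr
            · exact Or.inr ⟨hc', Or.inl h2⟩
      · rw [h1] at hsb'; exact absurd hsb' (by cases l1 <;> simp)
    · by_cases hi2 : i = 2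
      · subst hi2
        rcases hPB with ⟨c, h1, h2⟩ | ⟨c, h1, h2⟩ | ⟨c, h1, h2⟩
        · rw [h1] at hsb'; exact absurd hsb' (by cases l1 <;> simp)
        · rw [h1] at hsb'
          obtain ⟨hl1, hxv, hl2⟩ := single_split hsb'
          subst hl1; subst hl2
          simp only [Prod.mk.injEq] at hxv
          obtain ⟨hx1, hv1⟩ := hxv
          replace hx1 := hx1.symm
          subst hx1; subst hv1
          have hs1 : s.sb 1 = [] := hsb 1 (by decide) (by decide)
          have hs3 : s.sb 3 = [] := hsb 3 (by decide) (by decide)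
          unfold WInv
          dsimp only
          refine ⟨?_, ?_, ?_, ?_, ?_, ?_, ?_⟩
          · intro j hj0 hj2
            simp only [Function.update_apply]
            rw [if_neg hj2]
            exact hsb j hj0 hj2
          · rcases hPA with ⟨c', e1', e2'⟩ | ⟨c', e1', e2'⟩ | ⟨c', e1', e2'⟩
            · exact Or.inl ⟨c', by simpa [Function.update_apply] using e1',
                by simpa [Function.update_apply, hab] using e2'⟩
            · exact Or.inr (Or.inl ⟨c', by simpa [Function.update_apply] using e1',
                by simpa [Function.update_apply, hab] using e2'⟩)
            · exact Or.inr (Or.inr ⟨c', by simpa [Function.update_apply] using e1',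
                by simpa [Function.update_apply, hab] using e2'⟩)
          · exact Or.inr (Or.inr ⟨c, by simp, by simp⟩)
          · intro j p hp
            by_cases hc' : j = 2 ∨ hasAddr (s.sb j) b
            · rw [if_pos hc'] at hp; exact hib j p hp
            · rw [if_neg hc'] at hp
              rcases List.mem_cons.1 hp with hp | hp
              · right; rw [hp, h2]
              · exact hib j p hp
          · intro hc' hr
            simpa [Function.update_apply, hab] using hA1 hc' hr
          · intro _ _; simp
          · rintro ⟨h1', h3'⟩
            simp (config := { decide := true }) only [IL1, IL3, Function.update_apply,
              eq_self_iff_true, hab, hba, hs1, hs3, hasAddr_nil, hasAddr_cons,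
              if_true, if_false, false_and, and_false, false_or, or_false, true_and, and_true, true_or, or_true] at h1' h3'
            refine hM ⟨⟨h1'.1, ?_⟩, ⟨h3'.1, ?_⟩⟩
            · rcases h1'.2 with hbr | hc'
              · exact Or.inl hbr
              · exact Or.inr ⟨hc', Or.inl h2⟩
            · rcases h3'.2 with hbr | ⟨hc', hd⟩
              · exact Or.inl hbr
              · exact Or.inr ⟨hc', hd⟩
        · rw [h1] at hsb'; exact absurd hsb' (by cases l1 <;> simp)
      · rw [hsb i hi0 hi2] at hsb'
        exact absurd hsb' (by cases l1 <;> simp)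
/-- in the WMM I²E machine the IRIW outcome
r1 = 1, r2 = 0, r3 = 1, r4 = 0 is unreachable (stores are multi-copy
atomic). -/
theorem wmm_IRIW_forbidden (a b : ℕ) (hab : a ≠ b) :
    ¬ ∃ s : PSt,
        Relation.ReflTransGen (PStep (iriwProg a b)) (PInit (fun _ => 0)) s ∧
        1 ≤ s.cnt 0 ∧ 3 ≤ s.cnt 1 ∧ 1 ≤ s.cnt 2 ∧ 3 ≤ s.cnt 3 ∧
        s.res 1 0 = 1 ∧ s.res 1 2 = 0 ∧ s.res 3 0 = 1 ∧ s.res 3 2 = 0 := by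
  have key : ∀ s, Relation.ReflTransGen (PStep (iriwProg a b)) (PInit fun _ => 0) s →
      WInv a b s := by
    intro s h
    induction h with
    | refl => exact inv_init a b
    | tail hr hstep ih => exact inv_step hab ih hstep
  rintro ⟨s, hreach, h0, h1, h2, h3, r10, r12, r30, r32⟩
  obtain ⟨-, -, -, -, -, -, hM⟩ := key s hreach
  exact hM ⟨⟨r10, Or.inl ⟨h1, r12⟩⟩, ⟨r30, Or.inl ⟨h3, r32⟩⟩⟩
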